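/- Let N be a finite cyclic group of order m, M ≤ N a subgroup, u ∈ N, p a prime, and r an integer with r^p ≡ 1 (mod m) and gcd(r−1, m) = 1. If for integers 0 ≤ s < s' ≤ p−1 the elements u^{r^s} and u^{r^{s'}} lie in the same coset of M, then u ∈ M. -/

import Mathlib

private lemma mem_of_zpow_mem {N : Type*} [Group N] [Fintype N]
    (M : Subgroup N) (u : N) (t : ℤ) (hgcd : Int.gcd t (Fintype.card N : ℤ) = 1)
    (hmem : u ^ t ∈ M) : u ∈ M := by
  have hdvd : ((orderOf u : ℤ)) ∣ (Fintype.card N : ℤ) := by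
    exact_mod_cast orderOf_dvd_card
  have hco : IsCoprime t ((orderOf u : ℤ)) :=
    ((Int.isCoprime_iff_gcd_eq_one.mpr hgcd)).of_isCoprime_of_dvd_right hdvd
  obtain ⟨a, b, hab⟩ := hco
  have hu : u = (u ^ t) ^ a := by
    have h1 : u ^ ((orderOf u : ℤ)) = 1 := by
      rw [zpow_natCast, pow_orderOf_eq_one]
    calc u = u ^ (a * t + b * (orderOf u : ℤ)) := by rw [hab, zpow_one]
    _ = (u ^ t) ^ a * (u ^ ((orderOf u : ℤ))) ^ b := by
        rw [zpow_add, mul_comm a t, mul_comm b ((orderOf u : ℤ)), zpow_mul, zpow_mul]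
    _ = (u ^ t) ^ a := by rw [h1, one_zpow, mul_one]
  rw [hu]
  exact M.zpow_mem hmem a

theorem mem_of_same_coset (N : Type*) [Group N] [Fintype N] (hN : IsCyclic N)
    (m : ℕ) (hm : Fintype.card N = m) (M : Subgroup N) (u : N)
    (p : ℕ) (hp : p.Prime) (r : ℤ)
    (hr : r ^ p ≡ 1 [ZMOD m]) (hcop : Int.gcd (r - 1) (m : ℤ) = 1)
    (s s' : ℕ) (hss : s < s') (hs' : s' ≤ p - 1)
    (h : u ^ (r ^ s) * (u ^ (r ^ s'))⁻¹ ∈ M) : u ∈ M := by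
  subst hm
  set m := Fintype.card N with hmdef
  have hm0 : m ≠ 0 := Fintype.card_ne_zero
  have hmem : u ^ (r ^ s - r ^ s') ∈ M := by rwa [zpow_sub]
  apply mem_of_zpow_mem M u _ _ hmem
  -- gcd(r^s - r^s', m) = 1
  by_contra hg
  obtain ⟨q, hq, hqd⟩ := Nat.exists_prime_and_dvd hg
  have hqt : (q : ℤ) ∣ r ^ s - r ^ s' :=
    dvd_trans (Int.natCast_dvd_natCast.mpr hqd) (Int.gcd_dvd_left _ _)
  have hqm' : (q : ℤ) ∣ (m : ℤ) :=
    dvd_trans (Int.natCast_dvd_natCast.mpr hqd) (Int.gcd_dvd_right _ _)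
  have hqm : q ∣ m := Int.natCast_dvd_natCast.mp hqm'
  haveI : Fact q.Prime := ⟨hq⟩
  -- in ZMod q
  have hrp : ((r : ZMod q)) ^ p = 1 := by
    have : (q : ℤ) ∣ r ^ p - 1 := hqm'.trans (Int.ModEq.dvd hr.symm)
    have := (ZMod.intCast_zmod_eq_zero_iff_dvd (r ^ p - 1) q).mpr this
    push_cast at this
    linear_combination this
  have hrs : ((r : ZMod q)) ^ s = ((r : ZMod q)) ^ s' := by
    have := (ZMod.intCast_zmod_eq_zero_iff_dvd (r ^ s - r ^ s') q).mpr hqt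
    push_cast at this
    linear_combination this
  have hp1 : 1 ≤ p := hp.one_lt.le.trans' (by norm_num)
  have hunit : IsUnit ((r : ZMod q)) := by
    apply IsUnit.of_mul_eq_one ((r : ZMod q) ^ (p - 1))
    rw [← pow_succ']
    rwa [Nat.sub_add_cancel hp1]
  set ρ := hunit.unit with hρ
  have hρval : (ρ : ZMod q) = (r : ZMod q) := hunit.unit_spec
  have hρp : ρ ^ p = 1 := by
    ext
    rw [Units.val_pow_eq_pow_val, hρval, hrp, Units.val_one]
  have hρk : ρ ^ (s' - s) = 1 := by
    have h1 : ρ ^ s * ρ ^ (s' - s) = ρ ^ s * 1 := by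
      rw [mul_one, ← pow_add, Nat.add_sub_cancel' hss.le]
      ext
      rw [Units.val_pow_eq_pow_val, Units.val_pow_eq_pow_val, hρval, hrs]
    exact mul_left_cancel h1
  have hco : Nat.Coprime (s' - s) p := by
    rw [Nat.coprime_comm]
    refine (Nat.Prime.coprime_iff_not_dvd hp).mpr ?_
    intro hdvd
    have h1 : 0 < s' - s := Nat.sub_pos_of_lt hss
    have h2 : s' - s < p := by omega
    exact absurd (Nat.le_of_dvd h1 hdvd) (by omega)
  have hord : orderOf ρ = 1 := Nat.eq_one_of_dvd_coprimes hco
    (orderOf_dvd_of_pow_eq_one hρk) (orderOf_dvd_of_pow_eq_one hρp)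
  have hρ1 : ρ = 1 := orderOf_eq_one_iff.mp hord
  have hr1 : (r : ZMod q) = 1 := by rw [← hρval, hρ1, Units.val_one]
  have : (q : ℤ) ∣ r - 1 := by
    have := (ZMod.intCast_zmod_eq_zero_iff_dvd (r - 1) q).mpr
    apply (ZMod.intCast_zmod_eq_zero_iff_dvd (r - 1) q).mp
    push_cast
    rw [hr1, sub_self]
  have h2 : (q : ℤ) ∣ ((Int.gcd (r - 1) (m : ℤ) : ℕ) : ℤ) := by exact_mod_cast Int.dvd_gcd this hqm'
  rw [hcop] at h2
  have h3 : q ∣ 1 := by exact_mod_cast h2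
  exact hq.one_lt.ne' (Nat.dvd_one.mp h3)
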